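/- Let μ be a Borel probability measure on ℝ whose CDF P(x) = μ((−∞,x]) is Lipschitz with constant 1. Let g be a network on N agents, let a₀ : Fin N → [0,1] be a profile, and let η, δ > 0 satisfy η² ≥ 3·δ^{2/3}. Let t₁,…,t_N be i.i.d. random variables with law μ, and for each profile a : Fin N → [0,1] define the random pure profile b(a) by b(a)_j = 1 if t_j ≤ β_j(a) and b(a)_j = 0 otherwise. Then Prob( sup{ dist(b(a₀), b(a)) : a : Fin N → [0,1] with dist(β(a), β(a₀)) ≤ δ } ≥ η ) ≤ exp( −N·(η² − 3·δ^{2/3})² / (2·w(g)⁴) ). -/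

import Mathlib

open MeasureTheory Finset

/-- A weighted network on `N` agents. -/
structure Network (N : ℕ) where
  g : Fin N → Fin N → ℝ
  symm : ∀ i j, g i j = g j i
  nonneg : ∀ i j, 0 ≤ g i j
  diag : ∀ i, g i i = 0
  degPos : ∀ i, 0 < ∑ j, g i j

namespace Network

variable {N : ℕ}

/-- Degree of agent `i`. -/
noncomputable def deg (G : Network N) (i : Fin N) : ℝ := ∑ j, G.g i j

/-- Weighted average action `Av`. -/
noncomputable def Av (G : Network N) (a : Fin N → ℝ) : ℝ :=
  (∑ i, G.deg i * a i) / (∑ i, G.deg i)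

/-- Neighborhood average `βᵢ(a)`. -/
noncomputable def nbr (G : Network N) (a : Fin N → ℝ) (i : Fin N) : ℝ :=
  (∑ j, G.g i j * a j) / G.deg i

/-- Weighted distance between profiles. -/
noncomputable def wdist (G : Network N) (a b : Fin N → ℝ) : ℝ :=
  Real.sqrt ((∑ i, (G.deg i) ^ 2 * (a i - b i) ^ 2) / (∑ i, (G.deg i) ^ 2))

/-- Fineness `d(g) = max_{i,j} g i j / gᵢ`. -/
noncomputable def fineness (G : Network N) : ℝ := ⨆ i, ⨆ j, G.g i j / G.deg i

/-- Degree inequality `w(g) = max gᵢ / min gᵢ`. -/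
noncomputable def imbalance (G : Network N) : ℝ := (⨆ i, G.deg i) / (⨅ i, G.deg i)

/-- Balanced network: all degrees equal. -/
def Balanced (G : Network N) : Prop := ∀ i j, G.deg i = G.deg j

end Network

/-- Pure upper equilibrium for threshold profile `t`. -/
def IsUpperEq {N : ℕ} (G : Network N) (t a : Fin N → ℝ) : Prop :=
  (∀ i, a i = 0 ∨ a i = 1) ∧ ∀ i, (a i = 1 ↔ t i ≤ G.nbr a i)

/-- Mixed equilibrium for threshold profile `t`. -/
def IsMixedEq {N : ℕ} (G : Network N) (t a : Fin N → ℝ) : Prop :=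
  (∀ i, a i ∈ Set.Icc (0 : ℝ) 1) ∧
    ∀ i, (t i < G.nbr a i → a i = 1) ∧ (G.nbr a i < t i → a i = 0)

/-- The CDF of a measure. -/
noncomputable def cdf (μ : Measure ℝ) (x : ℝ) : ℝ := (μ (Set.Iic x)).toReal

/-- `x` is a strongly stable fixed point of `P`. -/
def StronglyStable (P : ℝ → ℝ) (x : ℝ) : Prop :=
  P x = x ∧ ∃ γ < (1 : ℝ), ∃ ε > (0 : ℝ), ∀ y ∈ Set.Icc (0 : ℝ) 1, |y - x| ≤ ε →
    (y ≤ x → P x + γ * (y - x) ≤ P y) ∧ (x ≤ y → P y ≤ P x + γ * (y - x))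

section Aux


lemma exp_mul_le_convex (u x : ℝ) (hx1 : -1 ≤ x) (hx2 : x ≤ 1) :
    Real.exp (u * x) ≤ (1 - x) / 2 * Real.exp (-u) + (1 + x) / 2 * Real.exp u := by
  have h := convexOn_exp.2 (Set.mem_univ (-u)) (Set.mem_univ u)
    (by linarith : (0:ℝ) ≤ (1 - x) / 2) (by linarith : (0:ℝ) ≤ (1 + x) / 2) (by ring)
  simp only [smul_eq_mul] at h
  rw [show (1 - x) / 2 * (-u) + (1 + x) / 2 * u = u * x by ring] at h
  exact h

lemma bernoulli_mgf_le (p u : ℝ) (hp0 : 0 ≤ p) (hp1 : p ≤ 1) :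
    (1 - p) * Real.exp (u * (0 - p)) + p * Real.exp (u * (1 - p)) ≤ Real.exp (u ^ 2 / 2) := by
  have h1 := exp_mul_le_convex u (-p) (by linarith) (by linarith)
  have h2 := exp_mul_le_convex u (1 - p) (by linarith) (by linarith)
  have hc : (1 - p) * Real.exp (u * (0 - p)) + p * Real.exp (u * (1 - p)) ≤ Real.cosh u := by
    rw [Real.cosh_eq]
    have e1 : u * (0 - p) = u * (-p) := by ring
    rw [e1]
    nlinarith [Real.exp_pos u, Real.exp_pos (-u)]
  exact hc.trans (Real.cosh_le_exp_half_sq u)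

lemma integral_pi_prod {n : ℕ} (μ : Fin n → Measure ℝ) [∀ i, SigmaFinite (μ i)]
    (f : Fin n → ℝ → ℝ) :
    ∫ x : Fin n → ℝ, ∏ i, f i (x i) ∂Measure.pi μ = ∏ i, ∫ x, f i x ∂μ i := by
  induction n with
  | zero => simp [Measure.pi_empty_univ, measureReal_def]
  | succ n ih =>
      calc
        _ = ∫ x : ℝ × (Fin n → ℝ),
            f 0 x.1 * ∏ i : Fin n, f (Fin.succ i) (x.2 i)
            ∂(μ 0).prod (Measure.pi fun i => μ (Fin.succ i)) := by
          rw [← ((measurePreserving_piFinSuccAbove μ 0).symm).integral_comp']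
          simp_rw [MeasurableEquiv.piFinSuccAbove_symm_apply, Fin.insertNthEquiv,
            Fin.prod_univ_succ, Fin.insertNth_zero, Equiv.coe_fn_mk, Fin.cons_succ,
            Fin.zero_succAbove, Fin.cons_zero, cast_eq]
        _ = (∫ x, f 0 x ∂μ 0) * ∏ i : Fin n, ∫ x, f (Fin.succ i) x ∂μ (Fin.succ i) := by
          rw [← ih, ← integral_prod_mul]
        _ = ∏ i, ∫ x, f i x ∂μ i := by rw [Fin.prod_univ_succ]

end Aux

set_option maxHeartbeats 1000000 in
/-- **Lemma: probability bound 2.** A uniform bound, over all profiles whose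
neighborhood averages are `δ`-close to those of `a₀`, on the distance between the realized
best responses to `a₀` and to `a`. -/
theorem prob_bound_two (μ : Measure ℝ) [IsProbabilityMeasure μ]
    (hLip : LipschitzWith 1 (cdf μ)) (N : ℕ) (G : Network N)
    (a₀ : Fin N → ℝ) (ha₀ : ∀ i, a₀ i ∈ Set.Icc (0 : ℝ) 1)
    (η δ : ℝ) (hη : 0 < η) (hδ : 0 < δ) (h : 3 * δ ^ ((2 : ℝ) / 3) ≤ η ^ 2) :
    (Measure.pi fun _ : Fin N => μ)
        {t | η ≤ sSup {r : ℝ | ∃ a : Fin N → ℝ,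
          (∀ i, a i ∈ Set.Icc (0 : ℝ) 1) ∧
          G.wdist (G.nbr a) (G.nbr a₀) ≤ δ ∧
          r = G.wdist (fun j => if t j ≤ G.nbr a₀ j then 1 else 0)
                (fun j => if t j ≤ G.nbr a j then 1 else 0)}} ≤
      ENNReal.ofReal
        (Real.exp (-(N * (η ^ 2 - 3 * δ ^ ((2 : ℝ) / 3)) ^ 2 / (2 * G.imbalance ^ 4)))) := by
  classical
  rcases Nat.eq_zero_or_pos N with hN | hN
  · subst hN
    have hempty : {t : Fin 0 → ℝ | η ≤ sSup {r : ℝ | ∃ a : Fin 0 → ℝ,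
          (∀ i, a i ∈ Set.Icc (0 : ℝ) 1) ∧
          G.wdist (G.nbr a) (G.nbr a₀) ≤ δ ∧
          r = G.wdist (fun j => if t j ≤ G.nbr a₀ j then 1 else 0)
                (fun j => if t j ≤ G.nbr a j then 1 else 0)}} = ∅ := by
      ext t
      simp only [Set.mem_setOf_eq, Set.mem_empty_iff_false, iff_false, not_le]
      have : sSup {r : ℝ | ∃ a : Fin 0 → ℝ,
          (∀ i, a i ∈ Set.Icc (0 : ℝ) 1) ∧
          G.wdist (G.nbr a) (G.nbr a₀) ≤ δ ∧
          r = G.wdist (fun j => if t j ≤ G.nbr a₀ j then 1 else 0)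
                (fun j => if t j ≤ G.nbr a j then 1 else 0)} ≤ 0 := by
        apply Real.sSup_le _ le_rfl
        rintro r ⟨a, -, -, rfl⟩
        simp [Network.wdist]
      linarith
    rw [hempty]
    simp
  haveI : Nonempty (Fin N) := Fin.pos_iff_nonempty.mp hN
  have hdeg : ∀ i, 0 < G.deg i := G.degPos
  -- basic quantities
  set β : Fin N → ℝ := G.nbr a₀ with hβ
  set ε : ℝ := δ ^ ((2 : ℝ) / 3) with hεdef
  have hε0 : 0 < ε := Real.rpow_pos_of_pos hδ _
  have hε3 : ε ^ 3 = δ ^ 2 := by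
    rw [hεdef, ← Real.rpow_natCast (δ ^ ((2 : ℝ) / 3)) 3, ← Real.rpow_mul hδ.le,
      ← Real.rpow_natCast δ 2]
    norm_num
  set S : ℝ := ∑ i, G.deg i ^ 2 with hSdef
  have hS0 : 0 < S := Finset.sum_pos (fun i _ => pow_pos (hdeg i) 2) univ_nonempty
  set c : Fin N → ℝ := fun j => G.deg j ^ 2 / S with hcdef
  have hc0 : ∀ j, 0 < c j := fun j => div_pos (pow_pos (hdeg j) 2) hS0
  have hcsum : ∑ j, c j = 1 := by
    rw [hcdef, ← Finset.sum_div, ← hSdef, div_self hS0.ne']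
  set p : Fin N → ℝ := fun j => cdf μ (β j + ε) - cdf μ (β j - ε) with hpdef
  set A : Fin N → Set ℝ := fun j => Set.Ioc (β j - ε) (β j + ε) with hAdef
  have hAmeas : ∀ j, MeasurableSet (A j) := fun j => measurableSet_Ioc
  have hpA : ∀ j, (μ (A j)).toReal = p j := by
    intro j
    have hsub : Set.Iic (β j - ε) ∪ Set.Ioc (β j - ε) (β j + ε) = Set.Iic (β j + ε) :=
      Set.Iic_union_Ioc_eq_Iic (by linarith)
    have hdisj : Disjoint (Set.Iic (β j - ε)) (Set.Ioc (β j - ε) (β j + ε)) :=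
      Set.Iic_disjoint_Ioc le_rfl
    have hu := measure_union (μ := μ) hdisj measurableSet_Ioc
    rw [hsub] at hu
    have h1 : (μ (Set.Iic (β j + ε))).toReal
        = (μ (Set.Iic (β j - ε))).toReal + (μ (Set.Ioc (β j - ε) (β j + ε))).toReal := by
      rw [hu, ENNReal.toReal_add (measure_ne_top μ _) (measure_ne_top μ _)]
    simp only [hpdef, cdf, hAdef]
    linarith
  have hp0 : ∀ j, 0 ≤ p j := fun j => (hpA j) ▸ ENNReal.toReal_nonneg
  have hp1 : ∀ j, p j ≤ 1 := by
    intro j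
    rw [← hpA j]
    calc (μ (A j)).toReal ≤ (μ Set.univ).toReal :=
          ENNReal.toReal_mono (measure_ne_top μ _) (measure_mono (Set.subset_univ _))
      _ = 1 := by simp
  have hp2ε : ∀ j, p j ≤ 2 * ε := by
    intro j
    have hl := hLip.dist_le_mul (β j + ε) (β j - ε)
    rw [Real.dist_eq, Real.dist_eq] at hl
    have habs : |cdf μ (β j + ε) - cdf μ (β j - ε)| ≤ 2 * ε := by
      calc |cdf μ (β j + ε) - cdf μ (β j - ε)| ≤ 1 * |β j + ε - (β j - ε)| := by
            exact_mod_cast hl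
        _ = 2 * ε := by rw [one_mul, show β j + ε - (β j - ε) = 2 * ε by ring,
              abs_of_nonneg (by linarith)]
    calc p j ≤ |p j| := le_abs_self _
      _ ≤ 2 * ε := by rw [hpdef]; exact habs
  set I : Fin N → ℝ → ℝ := fun j => (A j).indicator (fun _ => (1 : ℝ)) with hIdef
  have hI01 : ∀ j x, I j x = 0 ∨ I j x = 1 := by
    intro j x
    by_cases hx : x ∈ A j <;> simp [hIdef, hx]
  have hI0 : ∀ j x, 0 ≤ I j x := by
    intro j x; rcases hI01 j x with h' | h' <;> rw [h'] <;> norm_num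
  have hI1 : ∀ j x, I j x ≤ 1 := by
    intro j x; rcases hI01 j x with h' | h' <;> rw [h'] <;> norm_num
  set X : (Fin N → ℝ) → ℝ := fun t => ∑ j, c j * (I j (t j) - p j) with hXdef
  set s : ℝ := η ^ 2 - 3 * ε with hsdef
  have hs0 : 0 ≤ s := by rw [hsdef, hεdef]; linarith
  -- Step A : inclusion of events
  have hincl : {t : Fin N → ℝ | η ≤ sSup {r : ℝ | ∃ a : Fin N → ℝ,
          (∀ i, a i ∈ Set.Icc (0 : ℝ) 1) ∧
          G.wdist (G.nbr a) (G.nbr a₀) ≤ δ ∧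
          r = G.wdist (fun j => if t j ≤ G.nbr a₀ j then 1 else 0)
                (fun j => if t j ≤ G.nbr a j then 1 else 0)}} ⊆ {t | s ≤ X t} := by
    intro t ht
    simp only [Set.mem_setOf_eq] at ht ⊢
    set Q : ℝ := ∑ j, c j * I j (t j) with hQdef
    have hQ0 : 0 ≤ Q := Finset.sum_nonneg fun j _ => mul_nonneg (hc0 j).le (hI0 j _)
    have hsup : sSup {r : ℝ | ∃ a : Fin N → ℝ,
          (∀ i, a i ∈ Set.Icc (0 : ℝ) 1) ∧
          G.wdist (G.nbr a) (G.nbr a₀) ≤ δ ∧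
          r = G.wdist (fun j => if t j ≤ G.nbr a₀ j then 1 else 0)
                (fun j => if t j ≤ G.nbr a j then 1 else 0)} ≤ Real.sqrt (Q + ε) := by
      apply Real.sSup_le _ (Real.sqrt_nonneg _)
      rintro r ⟨a, _, hdist, rfl⟩
      rw [Network.wdist]
      apply Real.sqrt_le_sqrt
      have hΔ : ∑ j, c j * (G.nbr a j - β j) ^ 2 ≤ δ ^ 2 := by
        have hx0 : 0 ≤ (∑ i, G.deg i ^ 2 * (G.nbr a i - G.nbr a₀ i) ^ 2) / S :=
          div_nonneg (Finset.sum_nonneg fun i _ => by positivity) hS0.le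
        have hsq : (∑ i, G.deg i ^ 2 * (G.nbr a i - G.nbr a₀ i) ^ 2) / S ≤ δ ^ 2 := by
          have hdist2 : Real.sqrt ((∑ i, G.deg i ^ 2 * (G.nbr a i - G.nbr a₀ i) ^ 2) / S) ≤ δ :=
            hdist
          nlinarith [Real.sq_sqrt hx0,
            Real.sqrt_nonneg ((∑ i, G.deg i ^ 2 * (G.nbr a i - G.nbr a₀ i) ^ 2) / S), hδ.le]
        calc ∑ j, c j * (G.nbr a j - β j) ^ 2
            = (∑ i, G.deg i ^ 2 * (G.nbr a i - G.nbr a₀ i) ^ 2) / S := by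
              rw [Finset.sum_div]; exact Finset.sum_congr rfl fun j _ => by
                rw [hcdef, hβ]; ring
          _ ≤ δ ^ 2 := hsq
      have hkey : ∀ j, ((if t j ≤ G.nbr a₀ j then (1:ℝ) else 0)
            - (if t j ≤ G.nbr a j then (1:ℝ) else 0)) ^ 2
          ≤ I j (t j) + (G.nbr a j - β j) ^ 2 / ε ^ 2 := by
        intro j
        have hd2 : (0:ℝ) ≤ (G.nbr a j - β j) ^ 2 / ε ^ 2 := by positivity
        by_cases h1 : t j ≤ G.nbr a₀ j <;> by_cases h2 : t j ≤ G.nbr a j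
        · simp only [h1, h2, if_pos]
          simpa using add_nonneg (hI0 j _) hd2
        · -- differ, d = 1 : nbr a j < t j ≤ β j
          by_cases hΔε : |G.nbr a j - β j| ≤ ε
          · have hIj : I j (t j) = 1 := by
              have hmem : t j ∈ A j := by
                rw [hAdef]
                constructor
                · have := (abs_le.mp hΔε).1
                  have h2' : G.nbr a j < t j := not_le.mp h2
                  linarith
                · linarith [h1]
              simp [hIdef, hmem]
            simp only [h1, if_pos, h2, if_neg, not_false_iff]
            rw [hIj]; norm_num; linarith [hd2]
          · have hone : 1 ≤ (G.nbr a j - β j) ^ 2 / ε ^ 2 := by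
              rw [le_div_iff₀ (by positivity)]
              have := not_le.mp hΔε
              nlinarith [abs_nonneg (G.nbr a j - β j), sq_abs (G.nbr a j - β j)]
            simp only [h1, if_pos, h2, if_neg, not_false_iff]
            have := hI0 j (t j)
            norm_num; linarith
        · -- differ, d = -1 : β j < t j ≤ nbr a j
          by_cases hΔε : |G.nbr a j - β j| ≤ ε
          · have hIj : I j (t j) = 1 := by
              have hmem : t j ∈ A j := by
                rw [hAdef]
                constructor
                · linarith [not_le.mp h1]
                · have := (abs_le.mp hΔε).2
                  linarith [h2]
              simp [hIdef, hmem]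
            simp only [h1, if_neg, not_false_iff, h2, if_pos]
            rw [hIj]; norm_num; linarith [hd2]
          · have hone : 1 ≤ (G.nbr a j - β j) ^ 2 / ε ^ 2 := by
              rw [le_div_iff₀ (by positivity)]
              have := not_le.mp hΔε
              nlinarith [abs_nonneg (G.nbr a j - β j), sq_abs (G.nbr a j - β j)]
            simp only [h1, if_neg, not_false_iff, h2, if_pos]
            have := hI0 j (t j)
            norm_num; linarith
        · simp only [h1, h2, if_neg, not_false_iff]
          simpa using add_nonneg (hI0 j _) hd2
      calc (∑ i, G.deg i ^ 2 * ((if t i ≤ G.nbr a₀ i then (1:ℝ) else 0)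
              - (if t i ≤ G.nbr a i then (1:ℝ) else 0)) ^ 2) / S
          = ∑ j, c j * ((if t j ≤ G.nbr a₀ j then (1:ℝ) else 0)
              - (if t j ≤ G.nbr a j then (1:ℝ) else 0)) ^ 2 := by
            rw [Finset.sum_div]; exact Finset.sum_congr rfl fun j _ => by rw [hcdef]; ring
        _ ≤ ∑ j, c j * (I j (t j) + (G.nbr a j - β j) ^ 2 / ε ^ 2) :=
            Finset.sum_le_sum fun j _ => mul_le_mul_of_nonneg_left (hkey j) (hc0 j).le
        _ = Q + (∑ j, c j * (G.nbr a j - β j) ^ 2) / ε ^ 2 := by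
            rw [hQdef, Finset.sum_div, ← Finset.sum_add_distrib]
            exact Finset.sum_congr rfl fun j _ => by ring
        _ ≤ Q + δ ^ 2 / ε ^ 2 := by gcongr
        _ = Q + ε := by
            rw [show δ ^ 2 = ε ^ 3 from hε3.symm]
            field_simp
    have hη2 : η ^ 2 ≤ Q + ε :=
      (Real.le_sqrt hη.le (by positivity)).mp (le_trans ht hsup)
    have hsump : ∑ j, c j * p j ≤ 2 * ε := by
      calc ∑ j, c j * p j ≤ ∑ j, c j * (2 * ε) :=
            Finset.sum_le_sum fun j _ => mul_le_mul_of_nonneg_left (hp2ε j) (hc0 j).le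
        _ = 2 * ε := by rw [← Finset.sum_mul, hcsum, one_mul]
    have hXQ : X t = Q - ∑ j, c j * p j := by
      rw [hXdef, hQdef, ← Finset.sum_sub_distrib]
      exact Finset.sum_congr rfl fun j _ => by ring
    rw [hXQ, hsdef]
    linarith
  -- Step B : Chernoff bound
  set V : ℝ := ∑ j, (c j) ^ 2 with hVdef
  have hV0 : 0 < V := Finset.sum_pos (fun j _ => pow_pos (hc0 j) 2) univ_nonempty
  set L : ℝ := s / V with hLdef
  have hL0 : 0 ≤ L := div_nonneg hs0 hV0.le
  have hImeas : ∀ j, Measurable (I j) := fun j =>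
    measurable_const.indicator (hAmeas j)
  have hXmeas : Measurable X := by
    apply Finset.measurable_sum
    intro j _
    exact (measurable_const.mul (((hImeas j).comp (measurable_pi_apply j)).sub measurable_const))
  have hXbound : ∀ t, X t ≤ 1 := by
    intro t
    calc X t ≤ ∑ j, c j * 1 := Finset.sum_le_sum fun j _ => by
          have := hI1 j (t j); have := hp0 j
          exact mul_le_mul_of_nonneg_left (by linarith) (hc0 j).le
      _ = 1 := by rw [show (∑ j, c j * 1) = ∑ j, c j from Finset.sum_congr rfl fun j _ => mul_one _, hcsum]
  have hint : Integrable (fun t => Real.exp (L * X t)) (Measure.pi fun _ : Fin N => μ) := by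
    refine ⟨((hXmeas.const_mul L).exp).aestronglyMeasurable, ?_⟩
    apply HasFiniteIntegral.of_bounded (C := Real.exp L)
    filter_upwards with t
    rw [Real.norm_eq_abs, abs_of_pos (Real.exp_pos _)]
    exact Real.exp_le_exp.mpr (by nlinarith [hXbound t])
  have hchern := ProbabilityTheory.measure_ge_le_exp_mul_mgf (μ := Measure.pi fun _ : Fin N => μ) (X := X)
    s hL0 hint
  -- mgf bound
  have hmgf : ProbabilityTheory.mgf X (Measure.pi fun _ : Fin N => μ) L ≤ Real.exp (L ^ 2 * V / 2) := by
    rw [ProbabilityTheory.mgf]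
    have hprod : ∀ t : Fin N → ℝ, Real.exp (L * X t)
        = ∏ j, Real.exp (L * c j * (I j (t j) - p j)) := by
      intro t
      rw [← Real.exp_sum]
      congr 1
      rw [hXdef, Finset.mul_sum]
      exact Finset.sum_congr rfl fun j _ => by ring
    simp_rw [hprod]
    rw [integral_pi_prod (fun _ => μ) (fun j x => Real.exp (L * c j * (I j x - p j)))]
    have hcoord : ∀ j, ∫ x, Real.exp (L * c j * (I j x - p j)) ∂μ
        = (1 - p j) * Real.exp (L * c j * (0 - p j))
          + p j * Real.exp (L * c j * (1 - p j)) := by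
      intro j
      have hfe : (fun x => Real.exp (L * c j * (I j x - p j)))
          = fun x => (A j).indicator (fun _ => Real.exp (L * c j * (1 - p j))) x
            + (A j)ᶜ.indicator (fun _ => Real.exp (L * c j * (0 - p j))) x := by
        funext x
        by_cases hx : x ∈ A j
        · simp [hIdef, hx, Set.indicator_of_mem, Set.indicator_of_notMem]
        · simp [hIdef, hx, Set.indicator_of_mem, Set.indicator_of_notMem]
      rw [hfe, integral_add ((integrable_const _).indicator (hAmeas j))
        ((integrable_const _).indicator (hAmeas j).compl),
        integral_indicator_const _ (hAmeas j), integral_indicator_const _ (hAmeas j).compl]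
      have hAc : (μ (A j)ᶜ).toReal = 1 - p j := by
        rw [measure_compl (hAmeas j) (measure_ne_top μ _)]
        rw [measure_univ, ENNReal.toReal_sub_of_le (prob_le_one) (by norm_num)]
        rw [hpA j]; norm_num
      rw [measureReal_def, measureReal_def, hpA j, hAc]
      simp only [smul_eq_mul]
      ring
    calc ∏ j, ∫ x, Real.exp (L * c j * (I j x - p j)) ∂μ
        ≤ ∏ j, Real.exp ((L * c j) ^ 2 / 2) := by
          apply Finset.prod_le_prod
          · intro j _
            rw [hcoord j]
            have h0 := hp0 j; have h1 := hp1 j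
            have := (Real.exp_pos (L * c j * (0 - p j))).le
            have := (Real.exp_pos (L * c j * (1 - p j))).le
            nlinarith
          · intro j _
            rw [hcoord j]
            exact bernoulli_mgf_le (p j) (L * c j) (hp0 j) (hp1 j)
      _ = Real.exp (L ^ 2 * V / 2) := by
          rw [← Real.exp_sum]
          congr 1
          rw [hVdef, Finset.mul_sum, Finset.sum_div]
          exact Finset.sum_congr rfl fun j _ => by ring
  -- imbalance bounds
  set M : ℝ := ⨆ i, G.deg i with hMdef
  set m : ℝ := ⨅ i, G.deg i with hmdef
  have hbdd : BddAbove (Set.range G.deg) := (Set.finite_range _).bddAbove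
  have hbddb : BddBelow (Set.range G.deg) := (Set.finite_range _).bddBelow
  have hmmem : m ∈ Set.range G.deg := by
    rw [hmdef, iInf]
    exact (Set.range_nonempty G.deg).csInf_mem (Set.finite_range _)
  have hm0 : 0 < m := by obtain ⟨i, hi⟩ := hmmem; rw [← hi]; exact hdeg i
  have hmle : ∀ i, m ≤ G.deg i := fun i => ciInf_le hbddb i
  have hleM : ∀ i, G.deg i ≤ M := fun i => le_ciSup hbdd i
  have hmM : m ≤ M := le_trans (hmle (Classical.arbitrary _)) (hleM _)
  set w : ℝ := G.imbalance with hwdef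
  have hwMm : w = M / m := rfl
  have hw1 : 1 ≤ w := by rw [hwMm]; rw [le_div_iff₀ hm0]; linarith
  have hw0 : 0 < w := lt_of_lt_of_le one_pos hw1
  have hSm : (N : ℝ) * m ^ 2 ≤ S := by
    rw [hSdef]
    calc (N : ℝ) * m ^ 2 = ∑ _i : Fin N, m ^ 2 := by
          rw [Finset.sum_const, Finset.card_univ, Fintype.card_fin, nsmul_eq_mul]
      _ ≤ ∑ i, G.deg i ^ 2 := Finset.sum_le_sum fun i _ =>
          pow_le_pow_left₀ hm0.le (hmle i) 2
  have hcle : ∀ j, c j ≤ w ^ 2 / N := by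
    intro j
    rw [hcdef, hwMm, div_pow, div_div]
    apply div_le_div₀ (by positivity) (pow_le_pow_left₀ (hdeg j).le (hleM j) 2) (by positivity)
    calc m ^ 2 * N = (N : ℝ) * m ^ 2 := by ring
      _ ≤ S := hSm
  have hNV : (N : ℝ) * V ≤ w ^ 2 := by
    have : V ≤ w ^ 2 / N := by
      calc V = ∑ j, c j ^ 2 := rfl
        _ ≤ ∑ j, c j * (w ^ 2 / N) := Finset.sum_le_sum fun j _ => by
            rw [pow_two]; exact mul_le_mul_of_nonneg_left (hcle j) (hc0 j).le
        _ = w ^ 2 / N := by rw [← Finset.sum_mul, hcsum, one_mul]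
    have hN0 : (0:ℝ) < N := by exact_mod_cast hN
    calc (N : ℝ) * V ≤ (N : ℝ) * (w ^ 2 / N) := by
          exact mul_le_mul_of_nonneg_left this hN0.le
      _ = w ^ 2 := by field_simp
  -- final chain
  have hfinal : Real.exp (-L * s) * ProbabilityTheory.mgf X (Measure.pi fun _ : Fin N => μ) L
      ≤ Real.exp (-((N : ℝ) * s ^ 2 / (2 * w ^ 4))) := by
    have hmgfpos : 0 ≤ ProbabilityTheory.mgf X (Measure.pi fun _ : Fin N => μ) L := ProbabilityTheory.mgf_nonneg
    calc Real.exp (-L * s) * ProbabilityTheory.mgf X (Measure.pi fun _ : Fin N => μ) L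
        ≤ Real.exp (-L * s) * Real.exp (L ^ 2 * V / 2) := by
          exact mul_le_mul_of_nonneg_left hmgf (Real.exp_pos _).le
      _ = Real.exp (- s ^ 2 / (2 * V)) := by
          rw [← Real.exp_add]
          congr 1
          rw [hLdef]
          field_simp
          ring
      _ ≤ Real.exp (-((N : ℝ) * s ^ 2 / (2 * w ^ 4))) := by
          apply Real.exp_le_exp.mpr
          rw [neg_div, neg_le_neg_iff]
          -- N s² / (2 w⁴) ≤ s² / (2V)
          have hw2' : 1 ≤ w ^ 2 := by nlinarith
          have hw2 : w ^ 2 ≤ w ^ 4 := by nlinarith [sq_nonneg w, sq_nonneg (w^2 - 1)]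
          have hNV4 : (N : ℝ) * V ≤ w ^ 4 := le_trans hNV hw2
          rw [div_le_div_iff₀ (by positivity) (by positivity)]
          nlinarith [sq_nonneg s, hV0]
  -- put everything together
  have hfin : ((Measure.pi fun _ : Fin N => μ) {t | s ≤ X t}).toReal
      ≤ Real.exp (-((N : ℝ) * s ^ 2 / (2 * w ^ 4))) := le_trans hchern hfinal
  refine le_trans (measure_mono hincl) ?_
  exact (ENNReal.le_ofReal_iff_toReal_le (measure_ne_top _ _) (Real.exp_pos _).le).mpr hfin
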